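/- In the two-player game on vertices v_0 (player 1), v_1 (player 2), v_2, v_3 with edges v_0→v_1, v_0→v_2, v_1→v_0, v_1→v_3, v_2→v_2, v_3→v_3, costs (1,2) for plays ending in v_2^ω, (0,1) for plays ending in v_3^ω, and (2,0) for (v_0v_1)^ω, the fixpoint of the weak-SPE elimination procedure is reached at α* = 2 with P_{α*}(hv_0) = (v_0v_1)^+ v_3^ω, P_{α*}(hv_1) = v_1(v_0v_1)^* v_3^ω, P_{α*}(hv_2) = {v_2^ω}, P_{α*}(hv_3) = {v_3^ω}; hence the set of outcomes of weak SPEs from v_0 is exactly (v_0 v_1)^+ v_3^ω. -/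

import Mathlib

open Classical

noncomputable section

/-- A multiplayer turn-based quantitative game on a directed graph:
`owner` assigns each vertex to a player, `E` is the edge relation (every
vertex has a successor), and `cost i` is player `i`'s cost function on
infinite sequences of vertices (to be minimized), valued in `ℝ ∪ {±∞}`. -/
structure QGame (P V : Type) where
  owner : V → P
  E : V → V → Prop
  succ_exists : ∀ v, ∃ v', E v v'
  cost : P → (ℕ → V) → EReal

namespace QGame

variable {P V : Type}

/-- An infinite play of the game: consecutive vertices are joined by edges. -/
def IsPlay (G : QGame P V) (ρ : ℕ → V) : Prop := ∀ n, G.E (ρ n) (ρ (n + 1))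

/-- Concatenation `hρ` of a finite history `h` with an infinite play `ρ`. -/
def prepend (h : List V) (ρ : ℕ → V) : ℕ → V := fun n =>
  if hn : n < h.length then h.get ⟨n, hn⟩ else ρ (n - h.length)

/-- The prefix of length `n` of a play, as a list. -/
def playPrefix (ρ : ℕ → V) (n : ℕ) : List V := List.ofFn fun k : Fin n => ρ k

/-- `hv` is a history of the game initialized at `v0`: here `h` is the strict
past and `v` the current vertex; the sequence `h ++ [v]` starts at `v0` and
follows edges. -/
def IsHist (G : QGame P V) (v0 : V) (h : List V) (v : V) : Prop :=
  (h ++ [v]).head? = some v0 ∧ List.Chain' G.E (h ++ [v])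

/-- A (turn-based) strategy profile: given the past history and the current
vertex, choose the next vertex.  An individual strategy of player `i` is of
the same type; only its values at vertices owned by `i` matter. -/
abbrev Strat (P V : Type) := List V → V → V

/-- A profile/strategy is valid if it always follows edges. -/
def Valid (G : QGame P V) (σ : Strat P V) : Prop := ∀ h v, G.E v (σ h v)

/-- History/current-vertex pair produced after `n` steps of `σ` from `v`. -/
def outcomeAux (σ : Strat P V) (v : V) : ℕ → List V × V
  | 0 => ([], v)
  | n + 1 =>
      let p := outcomeAux σ v n
      (p.1 ++ [p.2], σ p.1 p.2)

/-- The outcome play of profile `σ` from initial vertex `v`. -/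
def outcome (σ : Strat P V) (v : V) (n : ℕ) : V := (outcomeAux σ v n).2

/-- The profile where player `i` unilaterally deviates to strategy `τ`
from the profile `σ`. -/
def devProf (G : QGame P V) (σ τ : Strat P V) (i : P) : Strat P V :=
  fun h v => if G.owner v = i then τ h v else σ h v

/-- The set of deviation steps of `τ` from `σ` (for player `i`, from `v`):
positions `n` along the outcome of the deviated profile where the current
vertex belongs to player `i` and `τ` disagrees with `σ`. -/
def devSteps (G : QGame P V) (σ τ : Strat P V) (i : P) (v : V) : Set ℕ :=
  {n | G.owner (outcome (G.devProf σ τ i) v n) = i ∧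
       σ (outcomeAux (G.devProf σ τ i) v n).1 (outcome (G.devProf σ τ i) v n) ≠
       τ (outcomeAux (G.devProf σ τ i) v n).1 (outcome (G.devProf σ τ i) v n)}

/-- `τ` is finitely deviating from `σ`. -/
def FinDev (G : QGame P V) (σ τ : Strat P V) (i : P) (v : V) : Prop :=
  (G.devSteps σ τ i v).Finite

/-- `τ` is one-shot deviating from `σ`: its unique deviation step is at the
initial vertex. -/
def OneShotDev (G : QGame P V) (σ τ : Strat P V) (i : P) (v : V) : Prop :=
  G.devSteps σ τ i v = {0}

/-- Nash equilibrium of the profile `σ` from `v`, with respect to a cost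
assignment `c` (no player has a profitable unilateral deviation). -/
def IsNEwith (G : QGame P V) (c : P → (ℕ → V) → EReal) (σ : Strat P V) (v : V) : Prop :=
  ∀ i τ, G.Valid τ →
    c i (outcome σ v) ≤ c i (outcome (G.devProf σ τ i) v)

/-- Weak Nash equilibrium: no profitable finitely deviating strategy. -/
def IsWeakNEwith (G : QGame P V) (c : P → (ℕ → V) → EReal) (σ : Strat P V) (v : V) : Prop :=
  ∀ i τ, G.Valid τ → G.FinDev σ τ i v →
    c i (outcome σ v) ≤ c i (outcome (G.devProf σ τ i) v)

/-- Very weak Nash equilibrium: no profitable one-shot deviating strategy. -/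
def IsVeryWeakNEwith (G : QGame P V) (c : P → (ℕ → V) → EReal) (σ : Strat P V) (v : V) : Prop :=
  ∀ i τ, G.Valid τ → G.OneShotDev σ τ i v →
    c i (outcome σ v) ≤ c i (outcome (G.devProf σ τ i) v)

/-- The strategy profile induced by `σ` in the subgame after history `h`. -/
def subStrat (σ : Strat P V) (h : List V) : Strat P V := fun g v => σ (h ++ g) v

/-- The cost functions of the subgame after history `h`. -/
def subCost (G : QGame P V) (h : List V) : P → (ℕ → V) → EReal :=
  fun i ρ => G.cost i (prepend h ρ)

/-- Subgame perfect equilibrium: Nash equilibrium in every subgame. -/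
def IsSPE (G : QGame P V) (v0 : V) (σ : Strat P V) : Prop :=
  ∀ h v, G.IsHist v0 h v → G.IsNEwith (G.subCost h) (subStrat σ h) v

/-- Weak subgame perfect equilibrium: weak NE in every subgame. -/
def IsWeakSPE (G : QGame P V) (v0 : V) (σ : Strat P V) : Prop :=
  ∀ h v, G.IsHist v0 h v → G.IsWeakNEwith (G.subCost h) (subStrat σ h) v

/-- Very weak subgame perfect equilibrium: very weak NE in every subgame. -/
def IsVeryWeakSPE (G : QGame P V) (v0 : V) (σ : Strat P V) : Prop :=
  ∀ h v, G.IsHist v0 h v → G.IsVeryWeakNEwith (G.subCost h) (subStrat σ h) v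

/-- One elimination step: `ρ` (a potential outcome in the subgame after `h`)
is erased if some player `i` controlling a vertex `ρ n` along `hρ` has an
alternative edge to some `v' ≠ ρ (n+1)` such that every play `ρ'` in the
current potential set after the extended history gives `i` a strictly
smaller cost than `hρ`. -/
def Eset (G : QGame P V) (Pr : List V → V → Set (ℕ → V)) (h : List V) :
    Set (ℕ → V) :=
  {ρ | ∃ n v', G.E (ρ n) v' ∧ v' ≠ ρ (n + 1) ∧
      ∀ ρ' ∈ Pr (h ++ playPrefix ρ (n + 1)) v',
        G.cost (G.owner (ρ n)) (prepend (h ++ playPrefix ρ (n + 1)) ρ') <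
          G.cost (G.owner (ρ n)) (prepend h ρ)}

/-- The transfinite sequence `P_α(hv)` of sets of potential outcomes of weak
Nash equilibria in the subgame `(G|_h, v)`: all plays at stage `0`, removal
of `E_α` at successors, intersections at limits. -/
def Pset (G : QGame P V) (α : Ordinal) : List V → V → Set (ℕ → V) :=
  Ordinal.limitRecOn (motive := fun _ => List V → V → Set (ℕ → V)) α
    (fun _h v => {ρ | G.IsPlay ρ ∧ ρ 0 = v})
    (fun _ Pr => fun h v => Pr h v \ G.Eset Pr h)
    (fun α _ Pr => fun h v => ⋂ (β : Ordinal) (hβ : β < α), Pr β hβ h v)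

/-- A sequence of plays converges to `ρ` (in the product topology on `V^ω`
with `V` discrete) iff every finite prefix of `ρ` is eventually a prefix of
the members of the sequence. -/
def Converges (ρs : ℕ → ℕ → V) (ρ : ℕ → V) : Prop :=
  ∀ m, ∃ N, ∀ n ≥ N, ∀ k ≤ m, ρs n k = ρ k

/-- Upper semicontinuity of a cost function on plays. -/
def USCcost (G : QGame P V) (c : (ℕ → V) → EReal) : Prop :=
  ∀ (ρs : ℕ → ℕ → V) (ρ : ℕ → V), (∀ n, G.IsPlay (ρs n)) → G.IsPlay ρ →
    Converges ρs ρ →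
      Filter.limsup (fun n => c (ρs n)) Filter.atTop ≤ c ρ

/-- A strategy (profile) is finite-memory if it is computed by a Moore
machine: a finite set `M` of memory states, updated while reading the
history, determines the move. -/
def FinMem (σ : Strat P V) : Prop :=
  ∃ (M : Type) (_ : Finite M) (m0 : M) (upd : M → V → M) (act : M → V → V),
    ∀ h v, σ h v = act (h.foldl upd m0) v

/-- Quantitative reachability cost: the least index at which `ρ` visits the
target set `T`, and `+∞` if `T` is never visited. -/
def reachCost (T : Set V) (ρ : ℕ → V) : EReal :=
  if h : ∃ n, ρ n ∈ T then ((Nat.find h : ℕ) : EReal) else ⊤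

/-- `G` is a quantitative reachability game with target sets `T i`. -/
def IsReachGame (G : QGame P V) (T : P → Set V) : Prop :=
  ∀ i ρ, G.cost i ρ = reachCost (T i) ρ

/-- The set of players that have not visited their target set along the
history `h`. -/
def Iset (T : P → Set V) (h : List V) : Set P := {i | ∀ u ∈ h, u ∉ T i}

end QGame

open QGame

/-- The two-player game of Figure 3: vertices `0 = v₀` (player `0`),
`1 = v₁` (player `1`), `2 = v₂`, `3 = v₃`; edges `v₀→v₁`, `v₀→v₂`, `v₁→v₀`,
`v₁→v₃`, `v₂→v₂`, `v₃→v₃`; plays ending in `v₂^ω` cost `(1,2)`, plays ending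
in `v₃^ω` cost `(0,1)`, and `(v₀v₁)^ω` costs `(2,0)` (costs are determined
by the ending cycle, hence prefix-independent). -/
noncomputable def exGame : QGame (Fin 2) (Fin 4) where
  owner := fun v => if v = 1 then 1 else 0
  E := fun a b =>
    (a = 0 ∧ (b = 1 ∨ b = 2)) ∨ (a = 1 ∧ (b = 0 ∨ b = 3)) ∨
    (a = 2 ∧ b = 2) ∨ (a = 3 ∧ b = 3)
  succ_exists := by decide
  cost := fun i ρ =>
    if ∃ N, ∀ n ≥ N, ρ n = 2 then (if i = 0 then 1 else 2)
    else if ∃ N, ∀ n ≥ N, ρ n = 3 then (if i = 0 then 0 else 1)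
    else (if i = 0 then 2 else 0)

/-- The play `(v₀v₁)^m v₃^ω` (for `m ≥ 1` these make up `(v₀v₁)⁺v₃^ω`). -/
def altPlay (m : ℕ) : ℕ → Fin 4 := fun n =>
  if n < 2 * m then (if n % 2 = 0 then 0 else 1) else 3

/-- The play `v₁ (v₀v₁)^m v₃^ω` (these make up `v₁(v₀v₁)^*v₃^ω`). -/
def bltPlay (m : ℕ) : ℕ → Fin 4 := fun n =>
  if n < 2 * m + 1 then (if n % 2 = 0 then 1 else 0) else 3

section Aux
open QGame
def Ends (c : Fin 4) (ρ : ℕ → Fin 4) : Prop := ∃ N, ∀ n ≥ N, ρ n = c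

lemma exE_iff (a b : Fin 4) : exGame.E a b ↔
    ((a = 0 ∧ (b = 1 ∨ b = 2)) ∨ (a = 1 ∧ (b = 0 ∨ b = 3)) ∨ (a = 2 ∧ b = 2) ∨ (a = 3 ∧ b = 3)) :=
  Iff.rfl

lemma Estep : ∀ a b : Fin 4, exGame.E a b →
    ((a = 0 → b = 1 ∨ b = 2) ∧ (a = 1 → b = 0 ∨ b = 3) ∧ (a = 2 → b = 2) ∧ (a = 3 → b = 3)) := by
  intro a b h
  rw [exE_iff] at h
  revert h; revert a b; decide

lemma exE_of (a b : Fin 4) (h : (a = 0 ∧ (b = 1 ∨ b = 2)) ∨ (a = 1 ∧ (b = 0 ∨ b = 3)) ∨ (a = 2 ∧ b = 2) ∨ (a = 3 ∧ b = 3)) : exGame.E a b := (exE_iff a b).2 h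

lemma owner_eq : ∀ v : Fin 4, exGame.owner v = if v = 1 then 1 else 0 := fun _ => rfl

lemma cost_of_ends2 (i : Fin 2) (ρ) (h2 : Ends 2 ρ) :
    exGame.cost i ρ = if i = 0 then 1 else 2 := by
  have h2' : ∃ N, ∀ n ≥ N, ρ n = 2 := h2
  simp only [exGame]
  rw [if_pos h2']

lemma ends3_not_ends2 {ρ} (h3 : Ends 3 ρ) : ¬ Ends 2 ρ := by
  rintro ⟨N, hN⟩; obtain ⟨M, hM⟩ := h3
  have := hN (max N M) (le_max_left _ _)
  have := hM (max N M) (le_max_right _ _)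
  simp_all

lemma cost_of_ends3 (i : Fin 2) (ρ) (h3 : Ends 3 ρ) :
    exGame.cost i ρ = if i = 0 then 0 else 1 := by
  have h2' : ¬ ∃ N, ∀ n ≥ N, ρ n = 2 := ends3_not_ends2 h3
  have h3' : ∃ N, ∀ n ≥ N, ρ n = 3 := h3
  simp only [exGame]
  rw [if_neg h2', if_pos h3']

lemma cost_of_alt (i : Fin 2) (ρ) (hρ : ∀ n, ρ n = 0 ∨ ρ n = 1) :
    exGame.cost i ρ = if i = 0 then 2 else 0 := by
  have h2' : ¬ ∃ N, ∀ n ≥ N, ρ n = 2 := by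
    rintro ⟨N, hN⟩; rcases hρ N with h | h <;> simp [hN N le_rfl] at h
  have h3' : ¬ ∃ N, ∀ n ≥ N, ρ n = 3 := by
    rintro ⟨N, hN⟩; rcases hρ N with h | h <;> simp [hN N le_rfl] at h
  simp only [exGame]
  rw [if_neg h2', if_neg h3']

lemma cost_nonneg (i : Fin 2) (ρ) : 0 ≤ exGame.cost i ρ := by
  simp only [exGame]
  split_ifs <;> norm_num

lemma Pset_zero (G : QGame (Fin 2) (Fin 4)) :
    G.Pset 0 = fun _h v => {ρ | G.IsPlay ρ ∧ ρ 0 = v} := by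
  simp [QGame.Pset, Ordinal.limitRecOn_zero]

lemma Pset_succ (G : QGame (Fin 2) (Fin 4)) (α : Ordinal) :
    G.Pset (α + 1) = fun h v => G.Pset α h v \ G.Eset (G.Pset α) h := by
  simp only [QGame.Pset, Ordinal.add_one_eq_succ, Ordinal.limitRecOn_succ]

lemma mem_Eset {G : QGame (Fin 2) (Fin 4)} {Pr h ρ} : ρ ∈ G.Eset Pr h ↔
    ∃ n v', G.E (ρ n) v' ∧ v' ≠ ρ (n + 1) ∧
      ∀ ρ' ∈ Pr (h ++ playPrefix ρ (n + 1)) v',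
        G.cost (G.owner (ρ n)) (prepend (h ++ playPrefix ρ (n + 1)) ρ') <
          G.cost (G.owner (ρ n)) (prepend h ρ) := Iff.rfl
end Aux
section Aux2
open QGame

lemma prepend_ge (h : List (Fin 4)) (ρ) (n : ℕ) (hn : h.length ≤ n) :
    prepend h ρ n = ρ (n - h.length) := dif_neg (not_lt.2 hn)

lemma ends_prepend (c : Fin 4) (h : List (Fin 4)) (ρ) :
    Ends c (prepend h ρ) ↔ Ends c ρ := by
  constructor
  · rintro ⟨N, hN⟩
    refine ⟨N, fun n hn => ?_⟩
    have := hN (n + h.length) (le_trans hn (Nat.le_add_right _ _))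
    rwa [prepend_ge _ _ _ (Nat.le_add_left _ _), Nat.add_sub_cancel] at this
  · rintro ⟨N, hN⟩
    refine ⟨N + h.length, fun n hn => ?_⟩
    rw [prepend_ge _ _ _ (le_trans (Nat.le_add_left _ _) hn)]
    exact hN _ (by omega)

lemma cost_prepend (i : Fin 2) (h : List (Fin 4)) (ρ) :
    exGame.cost i (prepend h ρ) = exGame.cost i ρ := by
  simp only [exGame]
  rw [show (∃ N, ∀ n ≥ N, prepend h ρ n = 2) ↔ (∃ N, ∀ n ≥ N, ρ n = 2) from ends_prepend 2 h ρ,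
      show (∃ N, ∀ n ≥ N, prepend h ρ n = 3) ↔ (∃ N, ∀ n ≥ N, ρ n = 3) from ends_prepend 3 h ρ]

-- play structure
variable {ρ : ℕ → Fin 4}

lemma fin4_cases (a : Fin 4) : a = 0 ∨ a = 1 ∨ a = 2 ∨ a = 3 := by omega

lemma stable2 (hp : exGame.IsPlay ρ) {n : ℕ} (h : ρ n = 2) : ∀ k, n ≤ k → ρ k = 2 := by
  intro k hk
  induction k with
  | zero => have : n = 0 := by omega
            subst this; exact h
  | succ k ih =>
    rcases Nat.lt_or_ge n (k+1) with h' | h'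
    · exact ((Estep _ _ (hp k)).2.2.1 (ih (by omega)))
    · have : n = k + 1 := by omega
      subst this; exact h

lemma stable3 (hp : exGame.IsPlay ρ) {n : ℕ} (h : ρ n = 3) : ∀ k, n ≤ k → ρ k = 3 := by
  intro k hk
  induction k with
  | zero => have : n = 0 := by omega
            subst this; exact h
  | succ k ih =>
    rcases Nat.lt_or_ge n (k+1) with h' | h'
    · exact ((Estep _ _ (hp k)).2.2.2 (ih (by omega)))
    · have : n = k + 1 := by omega
      subst this; exact h

lemma ends3_of_mem (hp : exGame.IsPlay ρ) {n : ℕ} (h : ρ n = 3) : Ends 3 ρ :=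
  ⟨n, fun k hk => stable3 hp h k hk⟩

lemma ends2_of_mem (hp : exGame.IsPlay ρ) {n : ℕ} (h : ρ n = 2) : Ends 2 ρ :=
  ⟨n, fun k hk => stable2 hp h k hk⟩

lemma no2 (hp : exGame.IsPlay ρ) (h3 : Ends 3 ρ) (n : ℕ) : ρ n ≠ 2 :=
  fun h => ends3_not_ends2 h3 (ends2_of_mem hp h)

/-- from 2, the only play is constant 2 -/
lemma from2 (hp : exGame.IsPlay ρ) (h0 : ρ 0 = 2) : ρ = fun _ => 2 :=
  funext fun n => stable2 hp h0 n (Nat.zero_le n)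

lemma from3 (hp : exGame.IsPlay ρ) (h0 : ρ 0 = 3) : ρ = fun _ => 3 :=
  funext fun n => stable3 hp h0 n (Nat.zero_le n)

lemma isPlay_const2 : exGame.IsPlay (fun _ => 2) := fun _ => exE_of _ _ (by simp)
lemma isPlay_const3 : exGame.IsPlay (fun _ => 3) := fun _ => exE_of _ _ (by simp)
lemma ends2_const2 : Ends 2 (fun _ => 2) := ⟨0, fun _ _ => rfl⟩
lemma ends3_const3 : Ends 3 (fun _ => 3) := ⟨0, fun _ _ => rfl⟩

/-- alternation lemma from 0 -/
lemma alt_from0 (hp : exGame.IsPlay ρ) (h0 : ρ 0 = 0) :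
    ∀ k, (∀ j ≤ k, ρ j = 0 ∨ ρ j = 1) → ρ k = if k % 2 = 0 then 0 else 1 := by
  intro k
  induction k with
  | zero => intro _; simpa using h0
  | succ k ih =>
    intro hall
    have hk := ih (fun j hj => hall j (by omega))
    have hstep := Estep _ _ (hp k)
    rcases hall (k+1) le_rfl with h | h
    · rw [h]
      split_ifs with hpar
      · rfl
      · -- k+1 odd, so k even, ρ k = 0, so ρ (k+1) ∈ {1,2}, contradiction with = 0
        exfalso
        have hk0 : ρ k = 0 := by rw [hk]; simp [show k % 2 = 0 by omega]
        rcases hstep.1 hk0 with h' | h' <;> simp [h] at h'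
    · rw [h]
      split_ifs with hpar
      · exfalso
        have hk1 : ρ k = 1 := by rw [hk]; simp [show ¬ (k % 2 = 0) by omega]
        rcases hstep.2.1 hk1 with h' | h' <;> simp [h] at h'
      · rfl

lemma alt_from1 (hp : exGame.IsPlay ρ) (h0 : ρ 0 = 1) :
    ∀ k, (∀ j ≤ k, ρ j = 0 ∨ ρ j = 1) → ρ k = if k % 2 = 0 then 1 else 0 := by
  intro k
  induction k with
  | zero => intro _; simpa using h0
  | succ k ih =>
    intro hall
    have hk := ih (fun j hj => hall j (by omega))
    have hstep := Estep _ _ (hp k)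
    rcases hall (k+1) le_rfl with h | h
    · rw [h]
      split_ifs with hpar
      · exfalso
        have hk0 : ρ k = 0 := by rw [hk]; simp [show ¬ (k % 2 = 0) by omega]
        rcases hstep.1 hk0 with h' | h' <;> simp [h] at h'
      · rfl
    · rw [h]
      split_ifs with hpar
      · rfl
      · exfalso
        have hk1 : ρ k = 1 := by rw [hk]; simp [show k % 2 = 0 by omega]
        rcases hstep.2.1 hk1 with h' | h' <;> simp [h] at h'
end Aux2
section Aux3
open QGame
variable {ρ : ℕ → Fin 4}

/-- `(v₀v₁)^m v₀ v₂^ω` -/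
def cltPlay (m : ℕ) : ℕ → Fin 4 := fun n =>
  if n < 2 * m + 1 then (if n % 2 = 0 then 0 else 1) else 2

/-- `v₁ (v₀v₁)^m v₀ v₂^ω` -/
def dltPlay (m : ℕ) : ℕ → Fin 4 := fun n =>
  if n < 2 * m + 2 then (if n % 2 = 0 then 1 else 0) else 2

lemma isPlay_altPlay (m : ℕ) : exGame.IsPlay (altPlay m) := by
  intro n
  apply exE_of
  unfold altPlay
  split_ifs <;> first | decide | (exfalso; omega)

lemma isPlay_bltPlay (m : ℕ) : exGame.IsPlay (bltPlay m) := by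
  intro n
  apply exE_of
  unfold bltPlay
  split_ifs <;> first | decide | (exfalso; omega)

lemma isPlay_cltPlay (m : ℕ) : exGame.IsPlay (cltPlay m) := by
  intro n
  apply exE_of
  unfold cltPlay
  split_ifs <;> first | decide | (exfalso; omega)

lemma isPlay_dltPlay (m : ℕ) : exGame.IsPlay (dltPlay m) := by
  intro n
  apply exE_of
  unfold dltPlay
  split_ifs <;> first | decide | (exfalso; omega)

lemma ends3_altPlay (m : ℕ) : Ends 3 (altPlay m) :=
  ⟨2*m, fun n hn => if_neg (by omega)⟩
lemma ends3_bltPlay (m : ℕ) : Ends 3 (bltPlay m) :=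
  ⟨2*m+1, fun n hn => if_neg (by omega)⟩
lemma ends2_cltPlay (m : ℕ) : Ends 2 (cltPlay m) :=
  ⟨2*m+1, fun n hn => if_neg (by omega)⟩
lemma ends2_dltPlay (m : ℕ) : Ends 2 (dltPlay m) :=
  ⟨2*m+2, fun n hn => if_neg (by omega)⟩

lemma altPlay_zero {m : ℕ} (hm : 1 ≤ m) : altPlay m 0 = 0 := by
  unfold altPlay; rw [if_pos (by omega)]; rfl
lemma bltPlay_zero (m : ℕ) : bltPlay m 0 = 1 := by
  unfold bltPlay; rw [if_pos (by omega)]; rfl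

/-- classification of plays starting at 0 -/
lemma class0 (hp : exGame.IsPlay ρ) (h0 : ρ 0 = 0) :
    (∀ n, ρ n = if n % 2 = 0 then 0 else 1) ∨
    (∃ m, 1 ≤ m ∧ ρ = altPlay m) ∨ (∃ m, ρ = cltPlay m) := by
  by_cases hex : ∃ n, ρ n = 2 ∨ ρ n = 3
  · right
    have hN := Nat.find_spec hex
    set N := Nat.find hex with hNdef
    have hlt : ∀ k < N, ρ k = 0 ∨ ρ k = 1 := by
      intro k hk
      have := Nat.find_min hex hk
      rcases fin4_cases (ρ k) with h | h | h | h <;> tauto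
    have hpar : ∀ k < N, ρ k = if k % 2 = 0 then 0 else 1 := by
      intro k hk
      exact alt_from0 hp h0 k (fun j hj => hlt j (by omega))
    have hN1 : 1 ≤ N := by
      rcases Nat.eq_zero_or_pos N with h | h
      · rw [h] at hN; rw [h0] at hN; simp at hN
      · exact h
    have hprev := hpar (N-1) (by omega)
    rcases hN with h2 | h3
    · -- ρ N = 2 ; previous vertex must be 0, so N-1 even, N odd
      right
      have hst := Estep _ _ (hp (N-1))
      have hNeq : ρ (N-1+1) = 2 := by rw [show N-1+1 = N by omega]; exact h2
      have hodd : (N-1) % 2 = 0 := by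
        by_contra hpar'
        have : ρ (N-1) = 1 := by rw [hprev, if_neg hpar']
        rcases hst.2.1 this with h' | h' <;> rw [hNeq] at h' <;> simp at h'
      refine ⟨(N-1)/2, ?_⟩
      funext n
      unfold cltPlay
      have h2m : 2 * ((N-1)/2) + 1 = N := by omega
      rw [h2m]
      split_ifs with hn hpar'
      · rw [hpar n hn, if_pos hpar']
      · rw [hpar n hn, if_neg hpar']
      · exact stable2 hp h2 n (by omega)
    · -- ρ N = 3; previous vertex 1, N even, N = 2m, m ≥ 1
      left
      have hst := Estep _ _ (hp (N-1))
      have hNeq : ρ (N-1+1) = 3 := by rw [show N-1+1 = N by omega]; exact h3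
      have hodd : (N-1) % 2 = 1 := by
        by_contra hpar'
        have : ρ (N-1) = 0 := by rw [hprev, if_pos (by omega)]
        rcases hst.1 this with h' | h' <;> rw [hNeq] at h' <;> simp at h'
      refine ⟨N/2, by omega, ?_⟩
      funext n
      unfold altPlay
      have h2m : 2 * (N/2) = N := by omega
      rw [h2m]
      split_ifs with hn hpar'
      · rw [hpar n hn, if_pos hpar']
      · rw [hpar n hn, if_neg hpar']
      · exact stable3 hp h3 n (by omega)
  · left
    push_neg at hex
    intro n
    refine alt_from0 hp h0 n (fun j _ => ?_)
    rcases fin4_cases (ρ j) with h | h | h | h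
    · tauto
    · tauto
    · exact absurd h (hex j).1
    · exact absurd h (hex j).2

/-- classification of plays starting at 1 -/
lemma class1 (hp : exGame.IsPlay ρ) (h0 : ρ 0 = 1) :
    (∀ n, ρ n = if n % 2 = 0 then 1 else 0) ∨
    (∃ m, ρ = bltPlay m) ∨ (∃ m, ρ = dltPlay m) := by
  by_cases hex : ∃ n, ρ n = 2 ∨ ρ n = 3
  · right
    have hN := Nat.find_spec hex
    set N := Nat.find hex with hNdef
    have hlt : ∀ k < N, ρ k = 0 ∨ ρ k = 1 := by
      intro k hk
      have := Nat.find_min hex hk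
      rcases fin4_cases (ρ k) with h | h | h | h <;> tauto
    have hpar : ∀ k < N, ρ k = if k % 2 = 0 then 1 else 0 := by
      intro k hk
      exact alt_from1 hp h0 k (fun j hj => hlt j (by omega))
    have hN1 : 1 ≤ N := by
      rcases Nat.eq_zero_or_pos N with h | h
      · rw [h] at hN; rw [h0] at hN; simp at hN
      · exact h
    have hprev := hpar (N-1) (by omega)
    rcases hN with h2 | h3
    · -- ρ N = 2; previous vertex 0, N-1 odd, N = 2m+2 even
      right
      have hst := Estep _ _ (hp (N-1))
      have hNeq : ρ (N-1+1) = 2 := by rw [show N-1+1 = N by omega]; exact h2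
      have hodd : (N-1) % 2 = 1 := by
        by_contra hpar'
        have : ρ (N-1) = 1 := by rw [hprev, if_pos (by omega)]
        rcases hst.2.1 this with h' | h' <;> rw [hNeq] at h' <;> simp at h'
      have hN2 : 2 ≤ N := by omega
      refine ⟨(N-2)/2, ?_⟩
      funext n
      unfold dltPlay
      have h2m : 2 * ((N-2)/2) + 2 = N := by omega
      rw [h2m]
      split_ifs with hn hpar'
      · rw [hpar n hn, if_pos hpar']
      · rw [hpar n hn, if_neg hpar']
      · exact stable2 hp h2 n (by omega)
    · -- ρ N = 3; previous vertex 1, N-1 even, N odd = 2m+1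
      left
      have hst := Estep _ _ (hp (N-1))
      have hNeq : ρ (N-1+1) = 3 := by rw [show N-1+1 = N by omega]; exact h3
      have hodd : (N-1) % 2 = 0 := by
        by_contra hpar'
        have : ρ (N-1) = 0 := by rw [hprev, if_neg hpar']
        rcases hst.1 this with h' | h' <;> rw [hNeq] at h' <;> simp at h'
      refine ⟨(N-1)/2, ?_⟩
      funext n
      unfold bltPlay
      have h2m : 2 * ((N-1)/2) + 1 = N := by omega
      rw [h2m]
      split_ifs with hn hpar'
      · rw [hpar n hn, if_pos hpar']
      · rw [hpar n hn, if_neg hpar']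
      · exact stable3 hp h3 n (by omega)
  · left
    push_neg at hex
    intro n
    refine alt_from1 hp h0 n (fun j _ => ?_)
    rcases fin4_cases (ρ j) with h | h | h | h
    · tauto
    · tauto
    · exact absurd h (hex j).1
    · exact absurd h (hex j).2
end Aux3
section Aux4
open QGame
variable {ρ : ℕ → Fin 4}

lemma er10 : ¬ ((1:EReal) < 0) := by exact_mod_cast (by norm_num : ¬((1:ℝ) < 0))
lemma er11 : ¬ ((1:EReal) < 1) := by exact_mod_cast (by norm_num : ¬((1:ℝ) < 1))
lemma er21 : ¬ ((2:EReal) < 1) := by exact_mod_cast (by norm_num : ¬((2:ℝ) < 1))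
lemma er12 : (1:EReal) < 2 := by exact_mod_cast (by norm_num : ((1:ℝ) < 2))
lemma er01 : (0:EReal) < 1 := by exact_mod_cast (by norm_num : ((0:ℝ) < 1))
lemma er02 : (0:EReal) < 2 := by exact_mod_cast (by norm_num : ((0:ℝ) < 2))
lemma er20 : ¬ ((2:EReal) ≤ 0) := by exact_mod_cast (by norm_num : ¬((2:ℝ) ≤ 0))
lemma er100 : ¬ ((1:EReal) ≤ 0) := by exact_mod_cast (by norm_num : ¬((1:ℝ) ≤ 0))
lemma er211 : ¬ ((2:EReal) ≤ 1) := by exact_mod_cast (by norm_num : ¬((2:ℝ) ≤ 1))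

lemma mem_Pset0 {h : List (Fin 4)} {v ρ} :
    ρ ∈ exGame.Pset 0 h v ↔ exGame.IsPlay ρ ∧ ρ 0 = v := by
  rw [Pset_zero]; exact Iff.rfl

lemma owner0 : exGame.owner 0 = 0 := rfl
lemma owner1 : exGame.owner 1 = 1 := rfl
lemma owner3 : exGame.owner 3 = 0 := rfl

lemma cost_pre_ends3 (i : Fin 2) (h : List (Fin 4)) (ρ) (h3 : Ends 3 ρ) :
    exGame.cost i (prepend h ρ) = if i = 0 then 0 else 1 := by
  rw [cost_prepend]; exact cost_of_ends3 _ _ h3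

lemma cost_pre_ends2 (i : Fin 2) (h : List (Fin 4)) (ρ) (h2 : Ends 2 ρ) :
    exGame.cost i (prepend h ρ) = if i = 0 then 1 else 2 := by
  rw [cost_prepend]; exact cost_of_ends2 _ _ h2

lemma cost_pre_alt (i : Fin 2) (h : List (Fin 4)) (ρ) (ha : ∀ n, ρ n = 0 ∨ ρ n = 1) :
    exGame.cost i (prepend h ρ) = if i = 0 then 2 else 0 := by
  rw [cost_prepend]; exact cost_of_alt _ _ ha

/-- generic: plays ending in `3^ω` are not eliminated, given suitable witnesses. -/
lemma not_mem_Eset_ends3 {Pr : List (Fin 4) → Fin 4 → Set (ℕ → Fin 4)} {h : List (Fin 4)}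
    (hp : exGame.IsPlay ρ) (h3 : Ends 3 ρ)
    (H2 : ∀ h', ∃ ρ' ∈ Pr h' 2, ¬ exGame.cost 0 (prepend h' ρ') < exGame.cost 0 (prepend h ρ))
    (H3 : ∀ h', ∃ ρ' ∈ Pr h' 3, ¬ exGame.cost 1 (prepend h' ρ') < exGame.cost 1 (prepend h ρ))
    (H0 : ∀ h', ∃ ρ' ∈ Pr h' 0, ¬ exGame.cost 1 (prepend h' ρ') < exGame.cost 1 (prepend h ρ)) :
    ρ ∉ exGame.Eset Pr h := by
  rintro ⟨n, v', he, hne, hall⟩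
  rcases fin4_cases (ρ n) with h0 | h1 | h2 | hh3
  · -- vertex 0, next must be 1, alternative 2
    have hnext : ρ (n+1) = 1 := by
      rcases (Estep _ _ (hp n)).1 (by rw [← h0]) with h' | h'
      · exact h'
      · exact absurd h' (no2 hp h3 _)
    have hv' : v' = 2 := by
      rw [h0] at he
      rcases (Estep _ _ he).1 rfl with h' | h'
      · rw [hnext] at hne; exact absurd h' hne
      · exact h'
    obtain ⟨ρ', hm, hc⟩ := H2 (h ++ playPrefix ρ (n+1))
    subst hv'
    apply hc
    have := hall ρ' hm
    rwa [h0, owner0] at this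
  · have hnext : ρ (n+1) = 0 ∨ ρ (n+1) = 3 := (Estep _ _ (hp n)).2.1 (by rw [← h1])
    have hv' : v' = 0 ∨ v' = 3 := by
      rw [h1] at he
      exact (Estep _ _ he).2.1 rfl
    rcases hnext with hnx | hnx
    · have hv3 : v' = 3 := by
        rcases hv' with h' | h'
        · rw [hnx] at hne; exact absurd h' hne
        · exact h'
      obtain ⟨ρ', hm, hc⟩ := H3 (h ++ playPrefix ρ (n+1))
      subst hv3
      apply hc
      have := hall ρ' hm
      rwa [h1, owner1] at this
    · have hv0 : v' = 0 := by
        rcases hv' with h' | h'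
        · exact h'
        · rw [hnx] at hne; exact absurd h' hne
      obtain ⟨ρ', hm, hc⟩ := H0 (h ++ playPrefix ρ (n+1))
      subst hv0
      apply hc
      have := hall ρ' hm
      rwa [h1, owner1] at this
  · exact no2 hp h3 n h2
  · have hnext : ρ (n+1) = 3 := (Estep _ _ (hp n)).2.2.2 (by rw [← hh3])
    have hv' : v' = 3 := by
      rw [hh3] at he
      exact (Estep _ _ he).2.2.2 rfl
    rw [hv', ← hnext] at hne
    exact hne rfl

lemma not_mem_Eset_const2 {Pr : List (Fin 4) → Fin 4 → Set (ℕ → Fin 4)} {h : List (Fin 4)} :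
    (fun _ => 2 : ℕ → Fin 4) ∉ exGame.Eset Pr h := by
  rintro ⟨n, v', he, hne, -⟩
  exact hne ((Estep _ _ he).2.2.1 rfl)

lemma not_mem_Eset_const3 {Pr : List (Fin 4) → Fin 4 → Set (ℕ → Fin 4)} {h : List (Fin 4)} :
    (fun _ => 3 : ℕ → Fin 4) ∉ exGame.Eset Pr h := by
  rintro ⟨n, v', he, hne, -⟩
  exact hne ((Estep _ _ he).2.2.2 rfl)

lemma clt0_val : ∀ n, cltPlay 0 n = if n = 0 then 0 else 2 := by
  intro n; unfold cltPlay
  rcases Nat.eq_zero_or_pos n with h | h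
  · subst h; rfl
  · rw [if_neg (by omega), if_neg (by omega)]

lemma not_mem_Eset_clt0 {Pr : List (Fin 4) → Fin 4 → Set (ℕ → Fin 4)} {h : List (Fin 4)}
    (H1 : ∀ h', ∃ ρ' ∈ Pr h' 1,
      ¬ exGame.cost 0 (prepend h' ρ') < exGame.cost 0 (prepend h (cltPlay 0))) :
    cltPlay 0 ∉ exGame.Eset Pr h := by
  rintro ⟨n, v', he, hne, hall⟩
  rcases Nat.eq_zero_or_pos n with h0 | h0
  · subst h0
    have hv0 : cltPlay 0 0 = 0 := by rw [clt0_val]; rfl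
    have hv1 : cltPlay 0 1 = 2 := by rw [clt0_val]; rfl
    rw [hv0] at he
    have hv' : v' = 1 := by
      rcases (Estep _ _ he).1 rfl with h' | h'
      · exact h'
      · rw [hv1] at hne; exact absurd h' hne
    obtain ⟨ρ', hm, hc⟩ := H1 (h ++ playPrefix (cltPlay 0) 1)
    subst hv'
    apply hc
    have := hall ρ' hm
    rwa [hv0, owner0] at this
  · have hv : cltPlay 0 n = 2 := by rw [clt0_val, if_neg (by omega)]
    have hv1 : cltPlay 0 (n+1) = 2 := by rw [clt0_val, if_neg (by omega)]
    rw [hv] at he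
    rw [hv1] at hne
    exact hne ((Estep _ _ he).2.2.1 rfl)
end Aux4
section Aux5
open QGame
variable {ρ : ℕ → Fin 4}

lemma c0_ends3 (h : List (Fin 4)) (ρ) (h3 : Ends 3 ρ) : exGame.cost 0 (prepend h ρ) = 0 := by
  rw [cost_pre_ends3 _ _ _ h3]; rfl
lemma c1_ends3 (h : List (Fin 4)) (ρ) (h3 : Ends 3 ρ) : exGame.cost 1 (prepend h ρ) = 1 := by
  rw [cost_pre_ends3 _ _ _ h3]; rfl
lemma c0_ends2 (h : List (Fin 4)) (ρ) (h2 : Ends 2 ρ) : exGame.cost 0 (prepend h ρ) = 1 := by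
  rw [cost_pre_ends2 _ _ _ h2]; rfl
lemma c1_ends2 (h : List (Fin 4)) (ρ) (h2 : Ends 2 ρ) : exGame.cost 1 (prepend h ρ) = 2 := by
  rw [cost_pre_ends2 _ _ _ h2]; rfl
lemma c0_alt (h : List (Fin 4)) (ρ) (ha : ∀ n, ρ n = 0 ∨ ρ n = 1) :
    exGame.cost 0 (prepend h ρ) = 2 := by
  rw [cost_pre_alt _ _ _ ha]; rfl
lemma c1_alt (h : List (Fin 4)) (ρ) (ha : ∀ n, ρ n = 0 ∨ ρ n = 1) :
    exGame.cost 1 (prepend h ρ) = 0 := by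
  rw [cost_pre_alt _ _ _ ha]; rfl

lemma one_ord : (1 : Ordinal) = 0 + 1 := (zero_add 1).symm
lemma two_ord : (2 : Ordinal) = 1 + 1 := (one_add_one_eq_two).symm

lemma Pset1_2 (h : List (Fin 4)) : exGame.Pset 1 h 2 = {fun _ => 2} := by
  rw [one_ord, Pset_succ]
  ext ρ
  simp only [Set.mem_diff, Set.mem_singleton_iff]
  constructor
  · rintro ⟨hm, -⟩
    obtain ⟨hp, h0⟩ := mem_Pset0.1 hm
    exact from2 hp h0
  · rintro rfl
    exact ⟨mem_Pset0.2 ⟨isPlay_const2, rfl⟩, not_mem_Eset_const2⟩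

lemma Pset1_3 (h : List (Fin 4)) : exGame.Pset 1 h 3 = {fun _ => 3} := by
  rw [one_ord, Pset_succ]
  ext ρ
  simp only [Set.mem_diff, Set.mem_singleton_iff]
  constructor
  · rintro ⟨hm, -⟩
    obtain ⟨hp, h0⟩ := mem_Pset0.1 hm
    exact from3 hp h0
  · rintro rfl
    exact ⟨mem_Pset0.2 ⟨isPlay_const3, rfl⟩, not_mem_Eset_const3⟩

lemma alt01 (halt : ∀ n, ρ n = if n % 2 = 0 then 0 else 1) : ∀ n, ρ n = 0 ∨ ρ n = 1 := by
  intro n; rw [halt n]; split_ifs <;> simp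
lemma alt10 (halt : ∀ n, ρ n = if n % 2 = 0 then 1 else 0) : ∀ n, ρ n = 0 ∨ ρ n = 1 := by
  intro n; rw [halt n]; split_ifs <;> simp

lemma Pset1_0 (h : List (Fin 4)) :
    exGame.Pset 1 h 0 = insert (cltPlay 0) {ρ | ∃ m, 1 ≤ m ∧ ρ = altPlay m} := by
  rw [one_ord, Pset_succ]
  ext ρ
  simp only [Set.mem_diff, Set.mem_insert_iff, Set.mem_setOf_eq]
  constructor
  · rintro ⟨hm, hnE⟩
    obtain ⟨hp, h0⟩ := mem_Pset0.1 hm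
    rcases class0 hp h0 with halt | ⟨m, hm1, rfl⟩ | ⟨m, rfl⟩
    · exfalso
      apply hnE
      refine ⟨0, 2, by rw [h0]; exact exE_of _ _ (by simp), ?_, ?_⟩
      · have h1 : ρ 1 = 1 := by rw [halt 1]; rfl
        rw [h1]; decide
      · intro ρ' hρ'
        have h2 : ρ' = fun _ => 2 := from2 (mem_Pset0.1 hρ').1 (mem_Pset0.1 hρ').2
        subst h2
        rw [h0, owner0, c0_ends2 _ _ ends2_const2, c0_alt _ _ (alt01 halt)]
        exact er12
    · right; exact ⟨m, hm1, rfl⟩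
    · rcases Nat.eq_zero_or_pos m with rfl | hm1
      · left; rfl
      · exfalso
        apply hnE
        have hv1 : cltPlay m 1 = 1 := by unfold cltPlay; rw [if_pos (by omega)]; rfl
        have hv2 : cltPlay m 2 = 0 := by unfold cltPlay; rw [if_pos (by omega)]; rfl
        refine ⟨1, 3, by rw [hv1]; exact exE_of _ _ (by simp), by rw [hv2]; decide, ?_⟩
        intro ρ' hρ'
        have h3 : ρ' = fun _ => 3 := from3 (mem_Pset0.1 hρ').1 (mem_Pset0.1 hρ').2
        subst h3
        rw [hv1, owner1, c1_ends3 _ _ ends3_const3, c1_ends2 _ _ (ends2_cltPlay m)]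
        exact er12
  · rintro (rfl | ⟨m, hm1, rfl⟩)
    · refine ⟨mem_Pset0.2 ⟨isPlay_cltPlay 0, by rw [clt0_val]; rfl⟩, not_mem_Eset_clt0 ?_⟩
      intro h'
      refine ⟨dltPlay 0, mem_Pset0.2 ⟨isPlay_dltPlay 0, by unfold dltPlay; rw [if_pos (by omega)]; rfl⟩, ?_⟩
      rw [c0_ends2 _ _ (ends2_dltPlay 0), c0_ends2 _ _ (ends2_cltPlay 0)]
      exact er11
    · refine ⟨mem_Pset0.2 ⟨isPlay_altPlay m, altPlay_zero hm1⟩,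
        not_mem_Eset_ends3 (isPlay_altPlay m) (ends3_altPlay m) ?_ ?_ ?_⟩
      · intro h'
        exact ⟨fun _ => 2, mem_Pset0.2 ⟨isPlay_const2, rfl⟩, by
          rw [c0_ends2 _ _ ends2_const2, c0_ends3 _ _ (ends3_altPlay m)]; exact er10⟩
      · intro h'
        exact ⟨fun _ => 3, mem_Pset0.2 ⟨isPlay_const3, rfl⟩, by
          rw [c1_ends3 _ _ ends3_const3, c1_ends3 _ _ (ends3_altPlay m)]; exact er11⟩
      · intro h'
        exact ⟨cltPlay 0, mem_Pset0.2 ⟨isPlay_cltPlay 0, by rw [clt0_val]; rfl⟩, by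
          rw [c1_ends2 _ _ (ends2_cltPlay 0), c1_ends3 _ _ (ends3_altPlay m)]; exact er21⟩

lemma Pset1_1 (h : List (Fin 4)) :
    exGame.Pset 1 h 1 = {ρ | ∃ m, ρ = bltPlay m} := by
  rw [one_ord, Pset_succ]
  ext ρ
  simp only [Set.mem_diff, Set.mem_setOf_eq]
  constructor
  · rintro ⟨hm, hnE⟩
    obtain ⟨hp, h0⟩ := mem_Pset0.1 hm
    rcases class1 hp h0 with halt | ⟨m, rfl⟩ | ⟨m, rfl⟩
    · exfalso
      apply hnE
      have h1 : ρ 1 = 0 := by rw [halt 1]; rfl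
      have h2 : ρ 2 = 1 := by rw [halt 2]; rfl
      refine ⟨1, 2, by rw [h1]; exact exE_of _ _ (by simp), by rw [h2]; decide, ?_⟩
      intro ρ' hρ'
      have hc : ρ' = fun _ => 2 := from2 (mem_Pset0.1 hρ').1 (mem_Pset0.1 hρ').2
      subst hc
      rw [h1, owner0, c0_ends2 _ _ ends2_const2, c0_alt _ _ (alt10 halt)]
      exact er12
    · exact ⟨m, rfl⟩
    · exfalso
      apply hnE
      have hv0 : dltPlay m 0 = 1 := by unfold dltPlay; rw [if_pos (by omega)]; rfl
      have hv1 : dltPlay m 1 = 0 := by unfold dltPlay; rw [if_pos (by omega)]; rfl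
      refine ⟨0, 3, by rw [hv0]; exact exE_of _ _ (by simp), by rw [hv1]; decide, ?_⟩
      intro ρ' hρ'
      have hc : ρ' = fun _ => 3 := from3 (mem_Pset0.1 hρ').1 (mem_Pset0.1 hρ').2
      subst hc
      rw [hv0, owner1, c1_ends3 _ _ ends3_const3, c1_ends2 _ _ (ends2_dltPlay m)]
      exact er12
  · rintro ⟨m, rfl⟩
    refine ⟨mem_Pset0.2 ⟨isPlay_bltPlay m, bltPlay_zero m⟩,
      not_mem_Eset_ends3 (isPlay_bltPlay m) (ends3_bltPlay m) ?_ ?_ ?_⟩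
    · intro h'
      exact ⟨fun _ => 2, mem_Pset0.2 ⟨isPlay_const2, rfl⟩, by
        rw [c0_ends2 _ _ ends2_const2, c0_ends3 _ _ (ends3_bltPlay m)]; exact er10⟩
    · intro h'
      exact ⟨fun _ => 3, mem_Pset0.2 ⟨isPlay_const3, rfl⟩, by
        rw [c1_ends3 _ _ ends3_const3, c1_ends3 _ _ (ends3_bltPlay m)]; exact er11⟩
    · intro h'
      exact ⟨cltPlay 0, mem_Pset0.2 ⟨isPlay_cltPlay 0, by rw [clt0_val]; rfl⟩, by
        rw [c1_ends2 _ _ (ends2_cltPlay 0), c1_ends3 _ _ (ends3_bltPlay m)]; exact er21⟩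
end Aux5
section Aux6
open QGame
variable {ρ : ℕ → Fin 4}

lemma Pset2_2 (h : List (Fin 4)) : exGame.Pset 2 h 2 = {fun _ => 2} := by
  rw [two_ord, Pset_succ]
  ext ρ
  simp only [Set.mem_diff, Set.mem_singleton_iff]
  constructor
  · rintro ⟨hm, -⟩
    rw [Pset1_2] at hm
    exact hm
  · rintro rfl
    exact ⟨by rw [Pset1_2]; rfl, not_mem_Eset_const2⟩

lemma Pset2_3 (h : List (Fin 4)) : exGame.Pset 2 h 3 = {fun _ => 3} := by
  rw [two_ord, Pset_succ]
  ext ρ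
  simp only [Set.mem_diff, Set.mem_singleton_iff]
  constructor
  · rintro ⟨hm, -⟩
    rw [Pset1_3] at hm
    exact hm
  · rintro rfl
    exact ⟨by rw [Pset1_3]; rfl, not_mem_Eset_const3⟩

lemma Pset2_0 (h : List (Fin 4)) :
    exGame.Pset 2 h 0 = {ρ | ∃ m, 1 ≤ m ∧ ρ = altPlay m} := by
  rw [two_ord, Pset_succ]
  ext ρ
  simp only [Set.mem_diff, Set.mem_setOf_eq]
  constructor
  · rintro ⟨hm, hnE⟩
    rw [Pset1_0] at hm
    rcases hm with rfl | hm
    · exfalso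
      apply hnE
      have hv0 : cltPlay 0 0 = 0 := by rw [clt0_val]; rfl
      have hv1 : cltPlay 0 1 = 2 := by rw [clt0_val]; rfl
      refine ⟨0, 1, by rw [hv0]; exact exE_of _ _ (by simp), by rw [hv1]; decide, ?_⟩
      intro ρ' hρ'
      rw [Pset1_1] at hρ'
      obtain ⟨m, rfl⟩ := hρ'
      rw [hv0, owner0, c0_ends3 _ _ (ends3_bltPlay m), c0_ends2 _ _ (ends2_cltPlay 0)]
      exact er01
    · exact hm
  · rintro ⟨m, hm1, rfl⟩
    refine ⟨by rw [Pset1_0]; right; exact ⟨m, hm1, rfl⟩,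
      not_mem_Eset_ends3 (isPlay_altPlay m) (ends3_altPlay m) ?_ ?_ ?_⟩
    · intro h'
      exact ⟨fun _ => 2, by rw [Pset1_2]; rfl, by
        rw [c0_ends2 _ _ ends2_const2, c0_ends3 _ _ (ends3_altPlay m)]; exact er10⟩
    · intro h'
      exact ⟨fun _ => 3, by rw [Pset1_3]; rfl, by
        rw [c1_ends3 _ _ ends3_const3, c1_ends3 _ _ (ends3_altPlay m)]; exact er11⟩
    · intro h'
      exact ⟨cltPlay 0, by rw [Pset1_0]; left; rfl, by
        rw [c1_ends2 _ _ (ends2_cltPlay 0), c1_ends3 _ _ (ends3_altPlay m)]; exact er21⟩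

lemma Pset2_1 (h : List (Fin 4)) :
    exGame.Pset 2 h 1 = {ρ | ∃ m, ρ = bltPlay m} := by
  rw [two_ord, Pset_succ]
  ext ρ
  simp only [Set.mem_diff, Set.mem_setOf_eq]
  constructor
  · rintro ⟨hm, -⟩
    rw [Pset1_1] at hm
    exact hm
  · rintro ⟨m, rfl⟩
    refine ⟨by rw [Pset1_1]; exact ⟨m, rfl⟩,
      not_mem_Eset_ends3 (isPlay_bltPlay m) (ends3_bltPlay m) ?_ ?_ ?_⟩
    · intro h'
      exact ⟨fun _ => 2, by rw [Pset1_2]; rfl, by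
        rw [c0_ends2 _ _ ends2_const2, c0_ends3 _ _ (ends3_bltPlay m)]; exact er10⟩
    · intro h'
      exact ⟨fun _ => 3, by rw [Pset1_3]; rfl, by
        rw [c1_ends3 _ _ ends3_const3, c1_ends3 _ _ (ends3_bltPlay m)]; exact er11⟩
    · intro h'
      exact ⟨cltPlay 0, by rw [Pset1_0]; left; rfl, by
        rw [c1_ends2 _ _ (ends2_cltPlay 0), c1_ends3 _ _ (ends3_bltPlay m)]; exact er21⟩

lemma Pset3_eq (h : List (Fin 4)) (v : Fin 4) :
    exGame.Pset (2 + 1) h v = exGame.Pset 2 h v := by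
  rw [Pset_succ]
  rcases fin4_cases v with rfl | rfl | rfl | rfl
  · ext ρ
    constructor
    · rintro ⟨hm, -⟩
      rw [Pset2_0] at hm
      rw [Pset2_0]
      exact hm
    intro hm
    rw [Pset2_0] at hm
    refine ⟨by rw [Pset2_0]; exact hm, fun hE => ?_⟩
    obtain ⟨m, hm1, rfl⟩ := hm
    refine not_mem_Eset_ends3 (isPlay_altPlay m) (ends3_altPlay m) ?_ ?_ ?_ hE
    · intro h'
      exact ⟨fun _ => 2, by rw [Pset2_2]; rfl, by
        rw [c0_ends2 _ _ ends2_const2, c0_ends3 _ _ (ends3_altPlay m)]; exact er10⟩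
    · intro h'
      exact ⟨fun _ => 3, by rw [Pset2_3]; rfl, by
        rw [c1_ends3 _ _ ends3_const3, c1_ends3 _ _ (ends3_altPlay m)]; exact er11⟩
    · intro h'
      exact ⟨altPlay 1, by rw [Pset2_0]; exact ⟨1, le_rfl, rfl⟩, by
        rw [c1_ends3 _ _ (ends3_altPlay 1), c1_ends3 _ _ (ends3_altPlay m)]; exact er11⟩
  · ext ρ
    constructor
    · rintro ⟨hm, -⟩
      rw [Pset2_1] at hm
      rw [Pset2_1]
      exact hm
    intro hm
    rw [Pset2_1] at hm
    refine ⟨by rw [Pset2_1]; exact hm, fun hE => ?_⟩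
    obtain ⟨m, rfl⟩ := hm
    refine not_mem_Eset_ends3 (isPlay_bltPlay m) (ends3_bltPlay m) ?_ ?_ ?_ hE
    · intro h'
      exact ⟨fun _ => 2, by rw [Pset2_2]; rfl, by
        rw [c0_ends2 _ _ ends2_const2, c0_ends3 _ _ (ends3_bltPlay m)]; exact er10⟩
    · intro h'
      exact ⟨fun _ => 3, by rw [Pset2_3]; rfl, by
        rw [c1_ends3 _ _ ends3_const3, c1_ends3 _ _ (ends3_bltPlay m)]; exact er11⟩
    · intro h'
      exact ⟨altPlay 1, by rw [Pset2_0]; exact ⟨1, le_rfl, rfl⟩, by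
        rw [c1_ends3 _ _ (ends3_altPlay 1), c1_ends3 _ _ (ends3_bltPlay m)]; exact er11⟩
  · ext ρ
    constructor
    · rintro ⟨hm, -⟩
      rw [Pset2_2] at hm
      rw [Pset2_2]
      exact hm
    intro hm
    rw [Pset2_2] at hm
    refine ⟨by rw [Pset2_2]; exact hm, fun hE => ?_⟩
    rw [hm] at hE
    exact not_mem_Eset_const2 hE
  · ext ρ
    constructor
    · rintro ⟨hm, -⟩
      rw [Pset2_3] at hm
      rw [Pset2_3]
      exact hm
    intro hm
    rw [Pset2_3] at hm
    refine ⟨by rw [Pset2_3]; exact hm, fun hE => ?_⟩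
    rw [hm] at hE
    exact not_mem_Eset_const3 hE
end Aux6
section Aux7
open QGame
variable {σ τ π : Strat (Fin 2) (Fin 4)}

lemma outcomeAux_len (σ : Strat (Fin 2) (Fin 4)) (v : Fin 4) :
    ∀ n, (outcomeAux σ v n).1.length = n := by
  intro n
  induction n with
  | zero => rfl
  | succ n ih => show ((outcomeAux σ v n).1 ++ [(outcomeAux σ v n).2]).length = n + 1
                 rw [List.length_append, ih]; rfl

lemma isPlay_outcome (hσ : exGame.Valid σ) (v : Fin 4) : exGame.IsPlay (outcome σ v) :=
  fun n => hσ (outcomeAux σ v n).1 (outcomeAux σ v n).2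

lemma valid_subStrat (hσ : exGame.Valid σ) (h : List (Fin 4)) :
    exGame.Valid (subStrat σ h) := fun g v => hσ (h ++ g) v

lemma devProf_eval (σ τ : Strat (Fin 2) (Fin 4)) (i : Fin 2) (g : List (Fin 4)) (v : Fin 4) :
    exGame.devProf σ τ i g v = if exGame.owner v = i then τ g v else σ g v := by
  unfold QGame.devProf
  split_ifs <;> rfl

lemma valid_devProf (hσ : exGame.Valid σ) (hτ : exGame.Valid τ) (i : Fin 2) :
    exGame.Valid (exGame.devProf σ τ i) := by
  intro g v
  rw [devProf_eval]
  split_ifs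
  · exact hτ g v
  · exact hσ g v

lemma subCost_eq (h : List (Fin 4)) (i : Fin 2) (ρ) :
    exGame.subCost h i ρ = exGame.cost i (prepend h ρ) := rfl

lemma c0e3 (ρ) (h3 : Ends 3 ρ) : exGame.cost 0 ρ = 0 := by rw [cost_of_ends3 _ _ h3]; rfl
lemma c1e3 (ρ) (h3 : Ends 3 ρ) : exGame.cost 1 ρ = 1 := by rw [cost_of_ends3 _ _ h3]; rfl
lemma c0e2 (ρ) (h2 : Ends 2 ρ) : exGame.cost 0 ρ = 1 := by rw [cost_of_ends2 _ _ h2]; rfl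
lemma c1e2 (ρ) (h2 : Ends 2 ρ) : exGame.cost 1 ρ = 2 := by rw [cost_of_ends2 _ _ h2]; rfl
lemma c0a (ρ) (ha : ∀ n, ρ n = 0 ∨ ρ n = 1) : exGame.cost 0 ρ = 2 := by
  rw [cost_of_alt _ _ ha]; rfl
lemma c1a (ρ) (ha : ∀ n, ρ n = 0 ∨ ρ n = 1) : exGame.cost 1 ρ = 0 := by
  rw [cost_of_alt _ _ ha]; rfl

lemma owner_ne1 : ∀ w : Fin 4, w ≠ 1 → exGame.owner w = 0 := by decide

/-- deviation "at vertex 1 go to 3" -/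
def tau13 (π : Strat (Fin 2) (Fin 4)) : Strat (Fin 2) (Fin 4) :=
  fun g w => if w = 1 then 3 else π g w

lemma tau13_at1 (g) : tau13 π g 1 = 3 := if_pos rfl
lemma tau13_ne (g) (w : Fin 4) (hw : w ≠ 1) : tau13 π g w = π g w := if_neg hw
lemma tau13_valid (hπ : exGame.Valid π) : exGame.Valid (tau13 π) := by
  intro g w
  by_cases hw : w = 1
  · subst hw; rw [tau13_at1]; exact exE_of _ _ (by simp)
  · rw [tau13_ne _ _ hw]; exact hπ g w

lemma dev13_at1 (g) : exGame.devProf π (tau13 π) 1 g 1 = 3 := by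
  rw [devProf_eval, owner1, if_pos rfl, tau13_at1]
lemma dev13_ne (g) (w : Fin 4) (hw : w ≠ 1) : exGame.devProf π (tau13 π) 1 g w = π g w := by
  rw [devProf_eval, owner_ne1 w hw, if_neg (by decide)]

/-- deviation "at vertex 0 go to 2" -/
def tau02 (π : Strat (Fin 2) (Fin 4)) : Strat (Fin 2) (Fin 4) :=
  fun g w => if w = 0 then 2 else π g w

lemma tau02_at0 (g) : tau02 π g 0 = 2 := if_pos rfl
lemma tau02_ne (g) (w : Fin 4) (hw : w ≠ 0) : tau02 π g w = π g w := if_neg hw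
lemma tau02_valid (hπ : exGame.Valid π) : exGame.Valid (tau02 π) := by
  intro g w
  by_cases hw : w = 0
  · subst hw; rw [tau02_at0]; exact exE_of _ _ (by simp)
  · rw [tau02_ne _ _ hw]; exact hπ g w

lemma dev02_at0 (g) : exGame.devProf π (tau02 π) 0 g 0 = 2 := by
  rw [devProf_eval, owner0, if_pos rfl, tau02_at0]
lemma dev02_ne (g) (w : Fin 4) (hw : w ≠ 0) : exGame.devProf π (tau02 π) 0 g w = π g w := by
  rw [devProf_eval]
  split_ifs with h
  · exact tau02_ne _ _ hw
  · rfl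

/-- Scenario S1: in a weak NE from vertex 1, player 1's cost is at most 1. -/
lemma S1 {h : List (Fin 4)} (hπ : exGame.Valid π)
    (hne : exGame.IsWeakNEwith (exGame.subCost h) π 1) :
    exGame.cost 1 (outcome π 1) ≤ 1 := by
  have hdv : exGame.Valid (exGame.devProf π (tau13 π) 1) :=
    valid_devProf hπ (tau13_valid hπ) 1
  have hout1 : outcome (exGame.devProf π (tau13 π) 1) 1 1 = 3 := dev13_at1 []
  have hout : ∀ n, 1 ≤ n → outcome (exGame.devProf π (tau13 π) 1) 1 n = 3 :=
    stable3 (isPlay_outcome hdv 1) hout1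
  have hfd : exGame.FinDev π (tau13 π) 1 1 := by
    apply Set.Finite.subset (Set.finite_singleton 0)
    intro n hn
    rcases Nat.eq_zero_or_pos n with rfl | hp0
    · rfl
    · exfalso
      obtain ⟨ho, -⟩ := hn
      rw [hout n hp0] at ho
      exact absurd ho (by decide)
  have hle := hne 1 (tau13 π) (tau13_valid hπ) hfd
  rw [subCost_eq, subCost_eq, cost_prepend, cost_prepend] at hle
  calc exGame.cost 1 (outcome π 1)
      ≤ exGame.cost 1 (outcome (exGame.devProf π (tau13 π) 1) 1) := hle
    _ = 1 := c1e3 _ ⟨1, hout⟩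

/-- Scenario S3: in a weak NE from vertex 1, player 0's cost is at most 1. -/
lemma S3 {h : List (Fin 4)} (hπ : exGame.Valid π)
    (hne : exGame.IsWeakNEwith (exGame.subCost h) π 1) :
    exGame.cost 0 (outcome π 1) ≤ 1 := by
  have hdv : exGame.Valid (exGame.devProf π (tau02 π) 0) :=
    valid_devProf hπ (tau02_valid hπ) 0
  have hout1 : outcome (exGame.devProf π (tau02 π) 0) 1 1 = π [] 1 := dev02_ne [] 1 (by decide)
  have key : exGame.cost 0 (outcome (exGame.devProf π (tau02 π) 0) 1) ≤ 1 ∧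
      exGame.FinDev π (tau02 π) 0 1 := by
    rcases (Estep _ _ (hπ [] 1)).2.1 rfl with h1 | h1
    · have hv1 : outcome (exGame.devProf π (tau02 π) 0) 1 1 = 0 := by rw [hout1, h1]
      have hv2 : outcome (exGame.devProf π (tau02 π) 0) 1 2 = 2 := by
        show exGame.devProf π (tau02 π) 0 _ (outcomeAux (exGame.devProf π (tau02 π) 0) 1 1).2 = 2
        have h2 : (outcomeAux (exGame.devProf π (tau02 π) 0) 1 1).2 = 0 := hv1
        rw [h2]
        exact dev02_at0 _
      have hst : ∀ n, 2 ≤ n → outcome (exGame.devProf π (tau02 π) 0) 1 n = 2 :=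
        stable2 (isPlay_outcome hdv 1) hv2
      refine ⟨by rw [c0e2 _ ⟨2, hst⟩], ?_⟩
      apply Set.Finite.subset (Set.Finite.insert 0 (Set.finite_singleton 1))
      intro n hn
      obtain ⟨-, hd⟩ := hn
      by_contra hmem
      simp only [Set.mem_insert_iff, Set.mem_singleton_iff] at hmem
      push_neg at hmem
      have h2n : 2 ≤ n := by omega
      apply hd
      rw [hst n h2n]
      exact (tau02_ne _ _ (by decide)).symm
    · have hv1 : outcome (exGame.devProf π (tau02 π) 0) 1 1 = 3 := by rw [hout1, h1]
      have hst : ∀ n, 1 ≤ n → outcome (exGame.devProf π (tau02 π) 0) 1 n = 3 :=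
        stable3 (isPlay_outcome hdv 1) hv1
      refine ⟨by rw [c0e3 _ ⟨1, hst⟩]; exact le_of_lt er01, ?_⟩
      apply Set.Finite.subset (Set.finite_singleton 0)
      intro n hn
      obtain ⟨-, hd⟩ := hn
      rcases Nat.eq_zero_or_pos n with rfl | hp0
      · rfl
      exfalso
      apply hd
      rw [hst n hp0]
      exact (tau02_ne _ _ (by decide)).symm
  have hle := hne 0 (tau02 π) (tau02_valid hπ) key.2
  rw [subCost_eq, subCost_eq, cost_prepend, cost_prepend] at hle
  exact le_trans hle key.1
end Aux7
section Aux8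
open QGame
variable {σ τ π : Strat (Fin 2) (Fin 4)}

/-- Lemma A: in every subgame at vertex 1 of a weak SPE, the outcome is `bltPlay m`. -/
lemma lemA (hσ : exGame.Valid σ) (hspe : exGame.IsWeakSPE 0 σ) (h : List (Fin 4))
    (hh : exGame.IsHist 0 h 1) : ∃ m, outcome (subStrat σ h) 1 = bltPlay m := by
  have hπ : exGame.Valid (subStrat σ h) := valid_subStrat hσ h
  have hne := hspe h 1 hh
  have hplay := isPlay_outcome hπ 1
  rcases class1 hplay rfl with halt | hb | ⟨m, hd⟩
  · exfalso
    have h2 : exGame.cost 0 (outcome (subStrat σ h) 1) = 2 := c0a _ (alt10 halt)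
    have := S3 hπ hne
    rw [h2] at this
    exact er211 this
  · exact hb
  · exfalso
    have h2 : exGame.cost 1 (outcome (subStrat σ h) 1) = 2 := by
      rw [hd]; exact c1e2 _ (ends2_dltPlay m)
    have := S1 hπ hne
    rw [h2] at this
    exact er211 this

lemma isHist_extend {h : List (Fin 4)} {v w : Fin 4} (hh : exGame.IsHist 0 h v)
    (he : exGame.E v w) : exGame.IsHist 0 (h ++ [v]) w := by
  obtain ⟨hhead, hchain⟩ := hh
  constructor
  · rw [List.head?_append]
    rw [List.head?_append] at hhead
    cases h with
    | nil => exact hhead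
    | cons a l => exact hhead
  · show List.IsChain exGame.E (h ++ [v] ++ [w])
    rw [List.isChain_append]
    refine ⟨hchain, List.isChain_singleton w, ?_⟩
    intro x hx y hy
    rw [List.getLast?_concat] at hx
    simp only [List.head?_cons, Option.mem_def, Option.some.injEq] at hx hy
    rw [← hx, ← hy]
    exact he

/-- shift lemma for a one-shot deviation at the root -/
lemma outcomeAux_shift {dev π : Strat (Fin 2) (Fin 4)} {a w : Fin 4}
    (h0 : dev [] a = w) (hag : ∀ g u, g ≠ [] → dev g u = π g u) :
    ∀ k, (outcomeAux dev a (k+1)).1 = a :: (outcomeAux (subStrat π [a]) w k).1 ∧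
         (outcomeAux dev a (k+1)).2 = (outcomeAux (subStrat π [a]) w k).2 := by
  intro k
  induction k with
  | zero => exact ⟨rfl, h0⟩
  | succ k ih =>
    obtain ⟨ih1, ih2⟩ := ih
    constructor
    · show (outcomeAux dev a (k+1)).1 ++ [(outcomeAux dev a (k+1)).2] = _
      rw [ih1, ih2]
      rfl
    · show dev (outcomeAux dev a (k+1)).1 (outcomeAux dev a (k+1)).2 = _
      rw [ih1, ih2, hag _ _ (by simp)]
      rfl

/-- Lemma B: in every subgame at vertex 0 of a weak SPE, the outcome is `altPlay m`, `m ≥ 1`. -/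
lemma lemB (hσ : exGame.Valid σ) (hspe : exGame.IsWeakSPE 0 σ) (h : List (Fin 4))
    (hh : exGame.IsHist 0 h 0) :
    ∃ m, 1 ≤ m ∧ outcome (subStrat σ h) 0 = altPlay m := by
  have hπ : exGame.Valid (subStrat σ h) := valid_subStrat hσ h
  have hne := hspe h 0 hh
  have hplay := isPlay_outcome hπ 0
  -- the one-shot deviation to vertex 1
  have hbound : exGame.cost 0 (outcome (subStrat σ h) 0) ≤ 0 := by
    set π := subStrat σ h with hπdef
    set τ : Strat (Fin 2) (Fin 4) := fun g w => if g = [] ∧ w = 0 then 1 else π g w with hτdef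
    have hτval : ∀ g w, τ g w = if g = [] ∧ w = 0 then 1 else π g w := fun _ _ => rfl
    have hτv : exGame.Valid τ := by
      intro g w
      rw [hτval]
      split_ifs with hc
      · rw [hc.2]; exact exE_of _ _ (by simp)
      · exact hπ g w
    have hd0 : exGame.devProf π τ 0 [] 0 = 1 := by
      rw [devProf_eval, owner0, if_pos rfl, hτval, if_pos ⟨rfl, rfl⟩]
    have hag : ∀ g u, g ≠ [] → exGame.devProf π τ 0 g u = π g u := by
      intro g u hg
      rw [devProf_eval]
      split_ifs with how
      · rw [hτval, if_neg (fun hc => hg hc.1)]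
      · rfl
    have hshift := outcomeAux_shift hd0 hag
    have hist1 : exGame.IsHist 0 (h ++ [0]) 1 := isHist_extend hh (exE_of _ _ (by simp))
    obtain ⟨m, hbm⟩ := lemA hσ hspe (h ++ [0]) hist1
    have hss : subStrat π [0] = subStrat σ (h ++ [0]) := by
      funext g u
      show σ (h ++ ([0] ++ g)) u = σ ((h ++ [0]) ++ g) u
      rw [List.append_assoc]
    have hE3 : Ends 3 (outcome (exGame.devProf π τ 0) 0) := by
      refine ⟨2*m+2, fun n hn => ?_⟩
      have hn1 : n = (n-1) + 1 := by omega
      rw [hn1]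
      show (outcomeAux (exGame.devProf π τ 0) 0 ((n-1)+1)).2 = 3
      rw [(hshift (n-1)).2]
      show outcome (subStrat π [0]) 1 (n-1) = 3
      rw [hss, hbm]
      show (if n - 1 < 2*m+1 then _ else (3:Fin 4)) = 3
      rw [if_neg (by omega)]
    have hfd : exGame.FinDev π τ 0 0 := by
      apply Set.Finite.subset (Set.finite_singleton 0)
      intro n hn
      obtain ⟨-, hd⟩ := hn
      rcases Nat.eq_zero_or_pos n with rfl | hp0
      · rfl
      exfalso
      apply hd
      have hg : (outcomeAux (exGame.devProf π τ 0) 0 n).1 ≠ [] := by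
        intro hc
        have := outcomeAux_len (exGame.devProf π τ 0) 0 n
        rw [hc] at this
        simp at this
        omega
      rw [hτval, if_neg (fun hc => hg hc.1)]
    have hle := hne 0 τ hτv hfd
    rw [subCost_eq, subCost_eq, cost_prepend, cost_prepend] at hle
    calc exGame.cost 0 (outcome π 0)
        ≤ exGame.cost 0 (outcome (exGame.devProf π τ 0) 0) := hle
      _ = 0 := c0e3 _ hE3
  rcases class0 hplay rfl with halt | ⟨m, hm, he⟩ | ⟨m, he⟩
  · exfalso
    have h2 : exGame.cost 0 (outcome (subStrat σ h) 0) = 2 := c0a _ (alt01 halt)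
    rw [h2] at hbound
    exact er20 hbound
  · exact ⟨m, hm, he⟩
  · exfalso
    have h2 : exGame.cost 0 (outcome (subStrat σ h) 0) = 1 := by
      rw [he]; exact c0e2 _ (ends2_cltPlay m)
    rw [h2] at hbound
    exact er100 hbound
end Aux8
section Aux9
open QGame

/-- the finite-memory (here: history-length-counting) strategy realizing `(v₀v₁)^m v₃^ω` -/
def sigmaM (m : ℕ) : Strat (Fin 2) (Fin 4) := fun g v =>
  if v = 0 then 1 else if v = 1 then (if 2*m ≤ g.length + 1 then 3 else 0) else v

lemma sigmaM_at0 (m) (g : List (Fin 4)) : sigmaM m g 0 = 1 := rfl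
lemma sigmaM_at1 (m) (g : List (Fin 4)) :
    sigmaM m g 1 = if 2*m ≤ g.length + 1 then 3 else 0 := rfl
lemma sigmaM_at2 (m) (g : List (Fin 4)) : sigmaM m g 2 = 2 := rfl
lemma sigmaM_at3 (m) (g : List (Fin 4)) : sigmaM m g 3 = 3 := rfl

lemma sigmaM_valid (m) : exGame.Valid (sigmaM m) := by
  intro g v
  rcases fin4_cases v with rfl | rfl | rfl | rfl
  · rw [sigmaM_at0]; exact exE_of _ _ (by simp)
  · rw [sigmaM_at1]
    split_ifs <;> exact exE_of _ _ (by simp)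
  · rw [sigmaM_at2]; exact exE_of _ _ (by simp)
  · rw [sigmaM_at3]; exact exE_of _ _ (by simp)

lemma subSigma_at0 (m) (h g : List (Fin 4)) : subStrat (sigmaM m) h g 0 = 1 := rfl
lemma subSigma_at2 (m) (h g : List (Fin 4)) : subStrat (sigmaM m) h g 2 = 2 := rfl
lemma subSigma_at3 (m) (h g : List (Fin 4)) : subStrat (sigmaM m) h g 3 = 3 := rfl
lemma subSigma_at1 (m) (h g : List (Fin 4)) :
    subStrat (sigmaM m) h g 1 = if 2*m ≤ (h.length + g.length) + 1 then 3 else 0 := by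
  show sigmaM m (h ++ g) 1 = _
  rw [sigmaM_at1, List.length_append]

lemma sigmaM_outcome (m) (hm : 1 ≤ m) : outcome (sigmaM m) 0 = altPlay m := by
  funext n
  induction n with
  | zero =>
    show (0:Fin 4) = altPlay m 0
    rw [altPlay_zero hm]
  | succ n ih =>
    have hlen : (outcomeAux (sigmaM m) 0 n).1.length = n := outcomeAux_len _ _ n
    show sigmaM m (outcomeAux (sigmaM m) 0 n).1 (outcome (sigmaM m) 0 n) = altPlay m (n+1)
    rw [ih]
    rcases Nat.lt_or_ge n (2*m) with hn | hn
    · rcases Nat.even_or_odd n with he | ho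
      · have hpar : n % 2 = 0 := Nat.even_iff.1 he
        have hv : altPlay m n = 0 := by unfold altPlay; rw [if_pos hn, if_pos hpar]
        rw [hv, sigmaM_at0]
        have h1 : n + 1 < 2*m := by omega
        unfold altPlay
        rw [if_pos h1, if_neg (by omega)]
      · have hpar : n % 2 = 1 := Nat.odd_iff.1 ho
        have hv : altPlay m n = 1 := by unfold altPlay; rw [if_pos hn, if_neg (by omega)]
        rw [hv, sigmaM_at1, hlen]
        rcases Nat.eq_or_lt_of_le (Nat.succ_le_of_lt hn) with he | hlt
        · -- n + 1 = 2m
          rw [if_pos (by omega)]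
          unfold altPlay
          rw [if_neg (by omega)]
        · rw [if_neg (by omega)]
          unfold altPlay
          rw [if_pos (by omega), if_pos (by omega)]
    · have hv : altPlay m n = 3 := by unfold altPlay; rw [if_neg (by omega)]
      rw [hv, sigmaM_at3]
      unfold altPlay
      rw [if_neg (by omega)]

/-- the outcome of `sigmaM` in any subgame from `0` or `1` ends in `3^ω` -/
lemma sigmaM_sub_ends3 (m) (h : List (Fin 4)) (v : Fin 4) (hv : v = 0 ∨ v = 1) :
    Ends 3 (outcome (subStrat (sigmaM m) h) v) := by
  have hπ : exGame.Valid (subStrat (sigmaM m) h) := valid_subStrat (sigmaM_valid m) h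
  by_cases hex : ∃ n, outcome (subStrat (sigmaM m) h) v n = 3
  · obtain ⟨n, hn⟩ := hex
    exact ⟨n, stable3 (isPlay_outcome hπ v) hn⟩
  exfalso
  push_neg at hex
  have hall : ∀ n, outcome (subStrat (sigmaM m) h) v n = 0 ∨
      outcome (subStrat (sigmaM m) h) v n = 1 := by
    intro n
    induction n with
    | zero => exact hv
    | succ n ih =>
      rcases ih with h0 | h1
      · right
        show subStrat (sigmaM m) h _ (outcome (subStrat (sigmaM m) h) v n) = 1
        rw [h0]; exact subSigma_at0 m h _
      · left
        have : outcome (subStrat (sigmaM m) h) v (n+1) =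
            subStrat (sigmaM m) h _ (outcome (subStrat (sigmaM m) h) v n) := rfl
        rw [this, h1, subSigma_at1]
        split_ifs with hc
        · exact absurd (by rw [this, h1, subSigma_at1, if_pos hc]) (hex (n+1))
        · rfl
  -- find a position ≥ 2m at vertex 1
  have hstep0 : ∀ n, outcome (subStrat (sigmaM m) h) v n = 0 →
      outcome (subStrat (sigmaM m) h) v (n+1) = 1 := by
    intro n h0
    show subStrat (sigmaM m) h _ (outcome (subStrat (sigmaM m) h) v n) = 1
    rw [h0]; exact subSigma_at0 m h _
  obtain ⟨n, hn2m, hn1⟩ : ∃ n, 2*m ≤ n ∧ outcome (subStrat (sigmaM m) h) v n = 1 := by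
    rcases hall (2*m) with h0 | h1
    · exact ⟨2*m + 1, by omega, hstep0 _ h0⟩
    · exact ⟨2*m, le_rfl, h1⟩
  apply hex (n+1)
  have hlen : (outcomeAux (subStrat (sigmaM m) h) v n).1.length = n := outcomeAux_len _ _ n
  show subStrat (sigmaM m) h _ (outcome (subStrat (sigmaM m) h) v n) = 3
  rw [hn1, subSigma_at1, hlen, if_pos (by omega)]

lemma sigmaM_ne01 (m : ℕ) (h : List (Fin 4)) (v : Fin 4) (hv : v = 0 ∨ v = 1) (i : Fin 2)
    (τ : Strat (Fin 2) (Fin 4)) (hτ : exGame.Valid τ)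
    (hfd : exGame.FinDev (subStrat (sigmaM m) h) τ i v) :
    exGame.cost i (outcome (subStrat (sigmaM m) h) v) ≤
      exGame.cost i (outcome (exGame.devProf (subStrat (sigmaM m) h) τ i) v) := by
  have hπ : exGame.Valid (subStrat (sigmaM m) h) := valid_subStrat (sigmaM_valid m) h
  have hdv : exGame.Valid (exGame.devProf (subStrat (sigmaM m) h) τ i) :=
    valid_devProf hπ hτ i
  have hE3 := sigmaM_sub_ends3 m h v hv
  rcases (show i = 0 ∨ i = 1 from by omega) with rfl | rfl
  · rw [c0e3 _ hE3]
    exact cost_nonneg 0 _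
  · rw [c1e3 _ hE3]
    by_cases hex : ∃ n, outcome (exGame.devProf (subStrat (sigmaM m) h) τ 1) v n = 3
    · obtain ⟨n, hn⟩ := hex
      rw [c1e3 _ ⟨n, stable3 (isPlay_outcome hdv v) hn⟩]
    exfalso
    push_neg at hex
    have hd0 : ∀ g, exGame.devProf (subStrat (sigmaM m) h) τ 1 g 0 = 1 := by
      intro g
      rw [devProf_eval, owner0, if_neg (by decide)]
      exact subSigma_at0 m h g
    have hd1 : ∀ g, exGame.devProf (subStrat (sigmaM m) h) τ 1 g 1 = τ g 1 := by
      intro g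
      rw [devProf_eval, owner1, if_pos rfl]
    have hall : ∀ n, outcome (exGame.devProf (subStrat (sigmaM m) h) τ 1) v n = 0 ∨
        outcome (exGame.devProf (subStrat (sigmaM m) h) τ 1) v n = 1 := by
      intro n
      induction n with
      | zero => exact hv
      | succ n ih =>
        have hrec : outcome (exGame.devProf (subStrat (sigmaM m) h) τ 1) v (n+1) =
            exGame.devProf (subStrat (sigmaM m) h) τ 1 _
              (outcome (exGame.devProf (subStrat (sigmaM m) h) τ 1) v n) := rfl
        rcases ih with h0 | h1
        · right; rw [hrec, h0, hd0]
        · left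
          rw [hrec, h1, hd1]
          rcases (Estep _ _ (hτ (outcomeAux (exGame.devProf (subStrat (sigmaM m) h) τ 1) v n).1 1)).2.1 rfl with ht | ht
          · exact ht
          · exfalso
            apply hex (n+1)
            rw [hrec, h1, hd1, ht]
    have hstep0 : ∀ n, outcome (exGame.devProf (subStrat (sigmaM m) h) τ 1) v n = 0 →
        outcome (exGame.devProf (subStrat (sigmaM m) h) τ 1) v (n+1) = 1 := by
      intro n h0
      show exGame.devProf (subStrat (sigmaM m) h) τ 1 _
        (outcome (exGame.devProf (subStrat (sigmaM m) h) τ 1) v n) = 1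
      rw [h0, hd0]
    obtain ⟨b, hb⟩ := hfd.bddAbove
    obtain ⟨n, hn2m, hnb, hn1⟩ : ∃ n, 2*m ≤ n ∧ b < n ∧
        outcome (exGame.devProf (subStrat (sigmaM m) h) τ 1) v n = 1 := by
      rcases hall (2*m + b + 1) with h0 | h1
      · exact ⟨2*m + b + 2, by omega, by omega, hstep0 _ h0⟩
      · exact ⟨2*m + b + 1, by omega, by omega, h1⟩
    have hmem : n ∈ exGame.devSteps (subStrat (sigmaM m) h) τ 1 v := by
      constructor
      · rw [hn1]; rfl
      · have hlen : (outcomeAux (exGame.devProf (subStrat (sigmaM m) h) τ 1) v n).1.length = n :=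
          outcomeAux_len _ _ n
        rw [hn1, subSigma_at1, hlen, if_pos (by omega)]
        intro hc
        apply hex (n+1)
        show exGame.devProf (subStrat (sigmaM m) h) τ 1 _
          (outcome (exGame.devProf (subStrat (sigmaM m) h) τ 1) v n) = 3
        rw [hn1, hd1, ← hc]
    exact absurd (hb hmem) (by omega)

lemma sigmaM_spe (m : ℕ) : exGame.IsWeakSPE 0 (sigmaM m) := by
  intro h v hh i τ hτ hfd
  have hπ : exGame.Valid (subStrat (sigmaM m) h) := valid_subStrat (sigmaM_valid m) h
  have hdv : exGame.Valid (exGame.devProf (subStrat (sigmaM m) h) τ i) :=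
    valid_devProf hπ hτ i
  rw [subCost_eq, subCost_eq, cost_prepend, cost_prepend]
  rcases fin4_cases v with rfl | rfl | rfl | rfl
  · exact sigmaM_ne01 m h 0 (Or.inl rfl) i τ hτ hfd
  · exact sigmaM_ne01 m h 1 (Or.inr rfl) i τ hτ hfd
  · have e1 : Ends 2 (outcome (subStrat (sigmaM m) h) 2) :=
      ⟨0, stable2 (isPlay_outcome hπ 2) rfl⟩
    have e2 : Ends 2 (outcome (exGame.devProf (subStrat (sigmaM m) h) τ i) 2) :=
      ⟨0, stable2 (isPlay_outcome hdv 2) rfl⟩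
    rw [cost_of_ends2 i _ e1, cost_of_ends2 i _ e2]
  · have e1 : Ends 3 (outcome (subStrat (sigmaM m) h) 3) :=
      ⟨0, stable3 (isPlay_outcome hπ 3) rfl⟩
    have e2 : Ends 3 (outcome (exGame.devProf (subStrat (sigmaM m) h) τ i) 3) :=
      ⟨0, stable3 (isPlay_outcome hdv 3) rfl⟩
    rw [cost_of_ends3 i _ e1, cost_of_ends3 i _ e2]
end Aux9


/-- In the game `exGame`, the fixpoint of the weak-SPE
elimination procedure is reached at `α* = 2`, with
`P_{α*}(hv₀) = (v₀v₁)⁺v₃^ω`, `P_{α*}(hv₁) = v₁(v₀v₁)^*v₃^ω`,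
`P_{α*}(hv₂) = {v₂^ω}` and `P_{α*}(hv₃) = {v₃^ω}` for every history `h`;
consequently the set of outcomes of weak SPEs from `v₀` is exactly
`(v₀v₁)⁺v₃^ω`. -/
theorem exGame_Pset_fixpoint :
    (∀ h : List (Fin 4),
      exGame.Pset 2 h 0 = {ρ | ∃ m : ℕ, 1 ≤ m ∧ ρ = altPlay m} ∧
      exGame.Pset 2 h 1 = {ρ | ∃ m : ℕ, ρ = bltPlay m} ∧
      exGame.Pset 2 h 2 = {fun _ => 2} ∧
      exGame.Pset 2 h 3 = {fun _ => 3}) ∧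
    (∀ (h : List (Fin 4)) (v : Fin 4),
      exGame.Pset (2 + 1) h v = exGame.Pset 2 h v) ∧
    {ρ | ∃ σ : Strat (Fin 2) (Fin 4),
        exGame.Valid σ ∧ exGame.IsWeakSPE 0 σ ∧ outcome σ 0 = ρ} =
      {ρ | ∃ m : ℕ, 1 ≤ m ∧ ρ = altPlay m} := by
  refine ⟨fun h => ⟨Pset2_0 h, Pset2_1 h, Pset2_2 h, Pset2_3 h⟩, Pset3_eq, ?_⟩
  ext ρ
  simp only [Set.mem_setOf_eq]
  constructor
  · rintro ⟨σ, hv, hspe, rfl⟩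
    have hist : exGame.IsHist 0 [] 0 := ⟨rfl, List.isChain_singleton 0⟩
    obtain ⟨m, hm, he⟩ := lemB hv hspe [] hist
    exact ⟨m, hm, he⟩
  · rintro ⟨m, hm, rfl⟩
    exact ⟨sigmaM m, sigmaM_valid m, sigmaM_spe m, sigmaM_outcome m hm⟩
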